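/- A collection of subcubes of 𝔹^n is the collection of principal trapspaces of some Boolean network of dimension n if and only if it is pre-principal. Moreover, for every pre-principal collection 𝒬 of subcubes of 𝔹^n, F(𝒬) is a trapping network with PT(F(𝒬)) = 𝒬, and for every trapping Boolean network g of dimension n, F(PT(g)) = g. -/
import Mathlib


/-!  Common definitions: Boolean networks on `Fin n → Bool`. -/

/-- The update `f^{(S)}` of the coordinates in `S` according to `f`. -/
def upd {n : ℕ} (f : (Fin n → Bool) → Fin n → Bool) (S : Finset (Fin n)) :
    (Fin n → Bool) → Fin n → Bool :=
  fun x i => if i ∈ S then f x i else x i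

/-- `f^{(S,T)} = f^{(T)} ∘ f^{(S)}`. -/
def upd2 {n : ℕ} (f : (Fin n → Bool) → Fin n → Bool) (S T : Finset (Fin n)) :
    (Fin n → Bool) → Fin n → Bool :=
  upd f T ∘ upd f S

/-- `Δ(x,y)`, the set of coordinates where `x` and `y` differ. -/
def delta {n : ℕ} (x y : Fin n → Bool) : Set (Fin n) := {i | x i ≠ y i}

/-- Hamming distance. -/
noncomputable def hdist {n : ℕ} (x y : Fin n → Bool) : ℕ := (delta x y).ncard

/-- The interval (subcube) `[x,y]`. -/
def interval {n : ℕ} (x y : Fin n → Bool) : Set (Fin n → Bool) :=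
  {z | delta x z ⊆ delta x y}

/-- A subcube of `𝔹^n`: fix the coordinates in `S` to `0` and those in `T` to `1`. -/
def IsSubcube {n : ℕ} (X : Set (Fin n → Bool)) : Prop :=
  ∃ S T : Set (Fin n), Disjoint S T ∧
    X = {x | (∀ i ∈ S, x i = false) ∧ (∀ i ∈ T, x i = true)}

/-- The partial order `f ⊑ g` on Boolean networks. -/
def BNle {n : ℕ} (f g : (Fin n → Bool) → Fin n → Bool) : Prop :=
  ∀ x, delta x (f x) ⊆ delta x (g x)

/-- A trapspace of `f`: an invariant subcube. -/
def IsTrapspace {n : ℕ} (f : (Fin n → Bool) → Fin n → Bool)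
    (X : Set (Fin n → Bool)) : Prop :=
  IsSubcube X ∧ ∀ x ∈ X, f x ∈ X

/-- The collection of all trapspaces of `f`. -/
def trapspaces {n : ℕ} (f : (Fin n → Bool) → Fin n → Bool) :
    Set (Set (Fin n → Bool)) :=
  {X | IsTrapspace f X}

/-- The principal trapspace `T_f(x)`: the smallest trapspace of `f` containing `x`. -/
def Tprin {n : ℕ} (f : (Fin n → Bool) → Fin n → Bool) (x : Fin n → Bool) :
    Set (Fin n → Bool) :=
  ⋂₀ {X | IsTrapspace f X ∧ x ∈ X}

/-- The collection of principal trapspaces of `f`. -/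
def PT {n : ℕ} (f : (Fin n → Bool) → Fin n → Bool) : Set (Set (Fin n → Bool)) :=
  {X | ∃ x, X = Tprin f x}

-- The opposite of `x` in a subcube `X` containing `x`: the coordinate `i` is flipped
-- iff some element of `X` differs from `x` there; so `[x, opp X x] = X` when `X` is a
-- subcube containing `x`.
open scoped Classical in
noncomputable def opp {n : ℕ} (X : Set (Fin n → Bool)) (x : Fin n → Bool) :
    Fin n → Bool :=
  fun i => if ∃ y ∈ X, y i ≠ x i then !(x i) else x i

/-- The trapping closure `f^T`, characterised by `[x, f^T(x)] = T_f(x)`. -/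
noncomputable def trapClosure {n : ℕ} (f : (Fin n → Bool) → Fin n → Bool) :
    (Fin n → Bool) → Fin n → Bool :=
  fun x => opp (Tprin f x) x

/-- The general asynchronous graph of `f`, as a relation on `𝔹^n`. -/
def GA {n : ℕ} (f : (Fin n → Bool) → Fin n → Bool) :
    (Fin n → Bool) → (Fin n → Bool) → Prop :=
  fun x y => ∃ S : Finset (Fin n), y = upd f S x

/-- The asynchronous graph of `f`, as a relation on `𝔹^n`. -/
def Agraph {n : ℕ} (f : (Fin n → Bool) → Fin n → Bool) :
    (Fin n → Bool) → (Fin n → Bool) → Prop :=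
  fun x y => ∃ i : Fin n, y = upd f {i} x

/-- The trapping graph of `f`: an edge `(x,y)` iff `y ∈ T_f(x)`. -/
def TG {n : ℕ} (f : (Fin n → Bool) → Fin n → Bool) :
    (Fin n → Bool) → (Fin n → Bool) → Prop :=
  fun x y => y ∈ Tprin f x

/-- A network is trapping if its general asynchronous graph is transitive. -/
def IsTrapping {n : ℕ} (f : (Fin n → Bool) → Fin n → Bool) : Prop :=
  Transitive (GA f)

/-- A commutative Boolean network: `f^{(i,j)} = f^{(j,i)}` for all `i,j`. -/
def IsCommutative' {n : ℕ} (f : (Fin n → Bool) → Fin n → Bool) : Prop :=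
  ∀ i j : Fin n, upd2 f {i} {j} = upd2 f {j} {i}

/-- `𝒜(x)`: the intersection of all members of `𝒜` containing `x`
(`= 𝔹^n` if no member contains `x`, since `⋂₀ ∅ = univ`). -/
def collAt {n : ℕ} (𝒜 : Set (Set (Fin n → Bool))) (x : Fin n → Bool) :
    Set (Fin n → Bool) :=
  ⋂₀ {A ∈ 𝒜 | x ∈ A}

/-- The network `F(𝒜)`, characterised by `[x, F(𝒜)(x)] = 𝒜(x)`. -/
noncomputable def Fnet {n : ℕ} (𝒜 : Set (Set (Fin n → Bool))) :
    (Fin n → Bool) → Fin n → Bool :=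
  fun x => opp (collAt 𝒜 x) x

/-- A collection of subcubes is pre-principal if `𝒬 = {𝒬(x) : x ∈ 𝔹^n}`. -/
def PrePrincipal {n : ℕ} (𝒬 : Set (Set (Fin n → Bool))) : Prop :=
  𝒬 = {X | ∃ x, X = collAt 𝒬 x}

/-- `λ(𝒜)`: unions of subcollections of `𝒜` that are subcubes. -/
def lamColl {n : ℕ} (𝒜 : Set (Set (Fin n → Bool))) : Set (Set (Fin n → Bool)) :=
  {X | ∃ ℛ ⊆ 𝒜, X = ⋃₀ ℛ ∧ IsSubcube X}

/-- `μ(𝒜) = {𝒜(x) : x ∈ 𝔹^n}`. -/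
def muColl {n : ℕ} (𝒜 : Set (Set (Fin n → Bool))) : Set (Set (Fin n → Bool)) :=
  {X | ∃ x, X = collAt 𝒜 x}

/-- A pre-ideal collection of subcubes. -/
def PreIdeal {n : ℕ} (𝒥 : Set (Set (Fin n → Bool))) : Prop :=
  Set.univ ∈ 𝒥 ∧
  (∀ A ∈ 𝒥, ∀ B ∈ 𝒥, (A ∩ B).Nonempty → A ∩ B ∈ 𝒥) ∧
  (∀ ℛ ⊆ 𝒥, IsSubcube (⋃₀ ℛ) → ⋃₀ ℛ ∈ 𝒥)

/-- The collection of minimal trapspaces of `f`. -/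
def MT {n : ℕ} (f : (Fin n → Bool) → Fin n → Bool) : Set (Set (Fin n → Bool)) :=
  {X | IsTrapspace f X ∧ ∀ Y, IsTrapspace f Y → ¬ Y ⊂ X}

/-- `M(f)`: the union of the minimal trapspaces of `f`. -/
def Mset {n : ℕ} (f : (Fin n → Bool) → Fin n → Bool) : Set (Fin n → Bool) :=
  ⋃₀ MT f

-- The min-trapping extension `f^M`: `[x, f^M(x)] = T_f(x)` if `x ∈ M(f)`,
-- and `f^M(x) = ¬x` otherwise.
open scoped Classical in
noncomputable def minExt {n : ℕ} (f : (Fin n → Bool) → Fin n → Bool) :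
    (Fin n → Bool) → Fin n → Bool :=
  fun x => if x ∈ Mset f then opp (Tprin f x) x else fun i => !(x i)

section Stmt5Aux

variable {n : ℕ}

lemma x_mem_interval (x y : Fin n → Bool) : x ∈ interval x y :=
  fun _ hi => absurd rfl hi

lemma y_mem_interval (x y : Fin n → Bool) : y ∈ interval x y := fun _ h => h

/-- The "difference set" of `X` seen from `x`. -/
def Dset (X : Set (Fin n → Bool)) (x : Fin n → Bool) : Set (Fin n) :=
  {i | ∃ y ∈ X, y i ≠ x i}

lemma delta_opp (X : Set (Fin n → Bool)) (x : Fin n → Bool) :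
    delta x (opp X x) = Dset X x := by
  ext i
  simp only [delta, opp, Dset, Set.mem_setOf_eq]
  by_cases h : ∃ y ∈ X, y i ≠ x i
  · rw [if_pos h]
    exact iff_of_true (by cases x i <;> simp) h
  · simp [h]

/-- A subcube containing `x` is a "ball" around `x`. -/
lemma subcube_K {X : Set (Fin n → Bool)} {x : Fin n → Bool}
    (hX : IsSubcube X) (hx : x ∈ X) : ∃ K, X = {z | delta x z ⊆ K} := by
  obtain ⟨S, T, _, rfl⟩ := hX
  refine ⟨(S ∪ T)ᶜ, ?_⟩
  ext z
  simp only [Set.mem_setOf_eq, delta, Set.subset_def, Set.mem_compl_iff,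
    Set.mem_union]
  constructor
  · intro hz i hi hST
    rcases hST with hS | hT
    · exact hi (by rw [hx.1 i hS, hz.1 i hS])
    · exact hi (by rw [hx.2 i hT, hz.2 i hT])
  · intro hz
    constructor
    · intro i hiS
      by_contra h
      have : x i ≠ z i := by rw [hx.1 i hiS]; exact fun he => h he.symm
      exact (hz i this) (Or.inl hiS)
    · intro i hiT
      by_contra h
      have : x i ≠ z i := by rw [hx.2 i hiT]; exact fun he => h he.symm
      exact (hz i this) (Or.inl (by exact absurd (Or.inr hiT) (hz i (by
        rw [hx.2 i hiT]; exact fun he => h he.symm))))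

lemma subcube_of_K {X : Set (Fin n → Bool)} {x : Fin n → Bool} {K : Set (Fin n)}
    (hX : X = {z | delta x z ⊆ K}) : IsSubcube X := by
  refine ⟨{i | i ∉ K ∧ x i = false}, {i | i ∉ K ∧ x i = true}, ?_, ?_⟩
  · rw [Set.disjoint_left]
    rintro i ⟨-, h0⟩ ⟨-, h1⟩; rw [h0] at h1; exact Bool.false_ne_true h1
  · rw [hX]; ext z
    simp only [Set.mem_setOf_eq, delta, Set.subset_def]
    constructor
    · intro hz
      constructor
      · rintro i ⟨hiK, h0⟩
        by_contra h
        exact hiK (hz i (by rw [h0]; exact fun he => h he.symm))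
      · rintro i ⟨hiK, h1⟩
        by_contra h
        exact hiK (hz i (by rw [h1]; exact fun he => h he.symm))
    · rintro ⟨h0, h1⟩ i hi
      by_contra hiK
      cases hxi : x i
      · exact hi (by rw [hxi, h0 i ⟨hiK, hxi⟩])
      · exact hi (by rw [hxi, h1 i ⟨hiK, hxi⟩])

/-- Canonical form of a subcube containing `x`. -/
lemma subcube_canon {X : Set (Fin n → Bool)} {x : Fin n → Bool}
    (hX : IsSubcube X) (hx : x ∈ X) : X = {z | delta x z ⊆ Dset X x} := by
  obtain ⟨K, hK⟩ := subcube_K hX hx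
  apply Set.Subset.antisymm
  · intro z hz i hi
    exact ⟨z, hz, fun he => hi he.symm⟩
  · intro z hz
    rw [hK]
    intro i hi
    obtain ⟨y, hy, hyi⟩ := hz hi
    rw [hK] at hy
    exact hy (fun he => hyi he.symm)

lemma interval_opp {X : Set (Fin n → Bool)} {x : Fin n → Bool}
    (hX : IsSubcube X) (hx : x ∈ X) : interval x (opp X x) = X := by
  rw [interval, delta_opp, ← subcube_canon hX hx]

lemma interval_isSubcube (x y : Fin n → Bool) : IsSubcube (interval x y) :=
  subcube_of_K (X := interval x y) rfl

lemma subcube_interval_subset {X : Set (Fin n → Bool)} {x y : Fin n → Bool}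
    (hX : IsSubcube X) (hx : x ∈ X) (hy : y ∈ X) : interval x y ⊆ X := by
  obtain ⟨K, hK⟩ := subcube_K hX hx
  rw [hK] at hy ⊢
  exact fun z hz i hi => hy (hz hi)

lemma sInter_subcube {𝒜 : Set (Set (Fin n → Bool))} {x : Fin n → Bool}
    (hs : ∀ A ∈ 𝒜, IsSubcube A) (hx : ∀ A ∈ 𝒜, x ∈ A) :
    IsSubcube (⋂₀ 𝒜) := by
  apply subcube_of_K (x := x) (K := {i | ∀ A ∈ 𝒜, i ∈ Dset A x})
  ext z
  simp only [Set.mem_sInter, Set.mem_setOf_eq, Set.subset_def]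
  constructor
  · intro hz i hi A hA
    exact ⟨z, hz A hA, fun he => hi he.symm⟩
  · intro hz A hA
    rw [subcube_canon (hs A hA) (hx A hA)]
    exact fun i hi => hz i hi A hA

lemma univ_trapspace (f : (Fin n → Bool) → Fin n → Bool) :
    IsTrapspace f Set.univ := by
  refine ⟨⟨∅, ∅, disjoint_bot_left, ?_⟩, fun _ _ => trivial⟩
  ext z; simp

lemma mem_Tprin_self (f : (Fin n → Bool) → Fin n → Bool) (x : Fin n → Bool) :
    x ∈ Tprin f x := fun _ hX => hX.2

lemma Tprin_subset {f : (Fin n → Bool) → Fin n → Bool} {x : Fin n → Bool}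
    {X : Set (Fin n → Bool)} (hX : IsTrapspace f X) (hx : x ∈ X) :
    Tprin f x ⊆ X := Set.sInter_subset_of_mem ⟨hX, hx⟩

lemma Tprin_trapspace (f : (Fin n → Bool) → Fin n → Bool) (x : Fin n → Bool) :
    IsTrapspace f (Tprin f x) := by
  constructor
  · exact sInter_subcube (fun A hA => hA.1.1) (fun A hA => hA.2)
  · intro y hy X hX
    exact hX.1.2 y (hy X hX)

lemma mem_Tprin_image (f : (Fin n → Bool) → Fin n → Bool) (x : Fin n → Bool) :
    f x ∈ Tprin f x :=
  (Tprin_trapspace f x).2 x (mem_Tprin_self f x)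

lemma mem_collAt_self (𝒜 : Set (Set (Fin n → Bool))) (x : Fin n → Bool) :
    x ∈ collAt 𝒜 x := fun _ hA => hA.2

lemma collAt_PT (f : (Fin n → Bool) → Fin n → Bool) (x : Fin n → Bool) :
    collAt (PT f) x = Tprin f x := by
  apply Set.Subset.antisymm
  · exact Set.sInter_subset_of_mem ⟨⟨x, rfl⟩, mem_Tprin_self f x⟩
  · intro z hz A hA
    obtain ⟨⟨y, rfl⟩, hx⟩ := hA
    exact Tprin_subset (Tprin_trapspace f y) hx hz

lemma PT_prePrincipal (f : (Fin n → Bool) → Fin n → Bool) :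
    PrePrincipal (PT f) := by
  unfold PrePrincipal
  ext X
  constructor
  · rintro ⟨x, rfl⟩; exact ⟨x, (collAt_PT f x).symm⟩
  · rintro ⟨x, rfl⟩; exact ⟨x, (collAt_PT f x)⟩

lemma collAt_mem {𝒬 : Set (Set (Fin n → Bool))} (h : PrePrincipal 𝒬)
    (x : Fin n → Bool) : collAt 𝒬 x ∈ 𝒬 := by
  have hx : collAt 𝒬 x ∈ {X | ∃ y, X = collAt 𝒬 y} := ⟨x, rfl⟩
  rwa [← h] at hx

lemma collAt_mono {𝒬 : Set (Set (Fin n → Bool))} (h : PrePrincipal 𝒬)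
    {x y : Fin n → Bool} (hy : y ∈ collAt 𝒬 x) : collAt 𝒬 y ⊆ collAt 𝒬 x :=
  Set.sInter_subset_of_mem ⟨collAt_mem h x, hy⟩

lemma bool_eq_of_ne_of_ne {a b c : Bool} (h1 : a ≠ b) (h2 : a ≠ c) : b = c := by
  cases a <;> cases b <;> cases c <;> simp_all

lemma GA_iff (f : (Fin n → Bool) → Fin n → Bool) (x y : Fin n → Bool) :
    GA f x y ↔ y ∈ interval x (f x) := by
  constructor
  · rintro ⟨S, rfl⟩ i hi
    simp only [delta, Set.mem_setOf_eq, upd] at hi ⊢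
    by_cases hS : i ∈ S
    · rw [if_pos hS] at hi; exact hi
    · rw [if_neg hS] at hi; exact absurd rfl hi
  · intro hy
    classical
    refine ⟨Finset.univ.filter (fun i => x i ≠ y i), ?_⟩
    funext i
    simp only [upd, Finset.mem_filter, Finset.mem_univ, true_and]
    by_cases h : x i ≠ y i
    · rw [if_pos h]
      exact bool_eq_of_ne_of_ne h (hy h)
    · rw [if_neg h]
      exact not_not.mp (fun hne => h (fun he => hne he.symm)) |>.symm ▸ by
        by_contra hc
        exact h (fun he => hc (he ▸ rfl))

lemma GA_self_image (f : (Fin n → Bool) → Fin n → Bool) (x : Fin n → Bool) :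
    GA f x (f x) :=
  (GA_iff f x (f x)).mpr (y_mem_interval x (f x))

lemma trapping_Tprin {g : (Fin n → Bool) → Fin n → Bool} (hg : IsTrapping g)
    (x : Fin n → Bool) : Tprin g x = interval x (g x) := by
  apply Set.Subset.antisymm
  · apply Tprin_subset _ (x_mem_interval x (g x))
    refine ⟨interval_isSubcube x (g x), ?_⟩
    intro y hy
    have h1 : GA g x y := (GA_iff g x y).mpr hy
    have h2 : GA g x (g y) := hg h1 (GA_self_image g y)
    exact (GA_iff g x (g y)).mp h2
  · exact subcube_interval_subset (Tprin_trapspace g x).1 (mem_Tprin_self g x)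
      (mem_Tprin_image g x)

lemma opp_interval (x y : Fin n → Bool) : opp (interval x y) x = y := by
  funext i
  simp only [opp]
  by_cases h : ∃ z ∈ interval x y, z i ≠ x i
  · rw [if_pos h]
    obtain ⟨z, hz, hzi⟩ := h
    have hxy : x i ≠ y i := hz (fun he => hzi he.symm)
    exact bool_eq_of_ne_of_ne (a := x i) (by cases x i <;> simp) hxy
  · rw [if_neg h]
    by_contra hc
    exact h ⟨y, y_mem_interval x y, fun he => hc he.symm⟩

section PP
variable {𝒬 : Set (Set (Fin n → Bool))} (h𝒬 : ∀ A ∈ 𝒬, IsSubcube A)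
  (hpp : PrePrincipal 𝒬)

include h𝒬 hpp

lemma Fnet_interval (x : Fin n → Bool) :
    interval x (Fnet 𝒬 x) = collAt 𝒬 x :=
  interval_opp (h𝒬 _ (collAt_mem hpp x)) (mem_collAt_self 𝒬 x)

lemma collAt_trapspace (x : Fin n → Bool) :
    IsTrapspace (Fnet 𝒬) (collAt 𝒬 x) := by
  refine ⟨h𝒬 _ (collAt_mem hpp x), ?_⟩
  intro y hy
  have : Fnet 𝒬 y ∈ collAt 𝒬 y := by
    rw [← Fnet_interval h𝒬 hpp y]
    exact y_mem_interval y (Fnet 𝒬 y)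
  exact collAt_mono hpp hy this

lemma Tprin_Fnet (x : Fin n → Bool) : Tprin (Fnet 𝒬) x = collAt 𝒬 x := by
  apply Set.Subset.antisymm
  · exact Tprin_subset (collAt_trapspace h𝒬 hpp x) (mem_collAt_self 𝒬 x)
  · rw [← Fnet_interval h𝒬 hpp x]
    exact subcube_interval_subset (Tprin_trapspace _ x).1 (mem_Tprin_self _ x)
      (mem_Tprin_image _ x)

lemma Fnet_trapping : IsTrapping (Fnet 𝒬) := by
  intro x y z hxy hyz
  rw [GA_iff] at *
  rw [Fnet_interval h𝒬 hpp] at *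
  exact collAt_mono hpp hxy hyz

lemma PT_Fnet : PT (Fnet 𝒬) = 𝒬 := by
  ext X
  constructor
  · rintro ⟨x, rfl⟩
    rw [Tprin_Fnet h𝒬 hpp]
    exact collAt_mem hpp x
  · intro hX
    rw [hpp] at hX
    obtain ⟨x, rfl⟩ := hX
    exact ⟨x, (Tprin_Fnet h𝒬 hpp x).symm⟩

end PP

end Stmt5Aux

/-- the collections of principal trapspaces are exactly the
pre-principal collections of subcubes; `F` and `PT` are mutually inverse between
pre-principal collections and trapping networks. -/
theorem stmt5 (n : ℕ) (𝒬 : Set (Set (Fin n → Bool))) (h𝒬 : ∀ A ∈ 𝒬, IsSubcube A) :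
    ((∃ f : (Fin n → Bool) → Fin n → Bool, PT f = 𝒬) ↔ PrePrincipal 𝒬) ∧
    (PrePrincipal 𝒬 → IsTrapping (Fnet 𝒬) ∧ PT (Fnet 𝒬) = 𝒬) ∧
    (∀ g : (Fin n → Bool) → Fin n → Bool, IsTrapping g → Fnet (PT g) = g) := by
  refine ⟨⟨?_, ?_⟩, fun hpp => ⟨Fnet_trapping h𝒬 hpp, PT_Fnet h𝒬 hpp⟩, ?_⟩
  · rintro ⟨f, rfl⟩
    exact PT_prePrincipal f
  · intro hpp
    exact ⟨Fnet 𝒬, PT_Fnet h𝒬 hpp⟩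
  · intro g hg
    funext x
    have : Fnet (PT g) x = opp (Tprin g x) x := by
      unfold Fnet
      rw [collAt_PT]
    rw [this, trapping_Tprin hg x, opp_interval]
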